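/- Let f(z) = a·∏_{i=0}^{m}(z^2 + z + c_i) (even degree d = 2m+2, a > 0) or f(z) = a(2z+1)∏_{i=0}^{m}(z^2+z+c_i) (odd degree), with real c_i ≥ 1/4 ordered increasingly c_0 ≤ c_1 ≤ ... ≤ c_m. If c_i ≤ 2i+2 for all i when d is odd, and c_i ≤ 2i+1 for all i when d is even, then the h*-polynomial of f has nonnegative coefficients. -/

import Mathlib

open PowerSeries Finset

namespace Stmt16Aux

lemma cast_choose_succ_right (n D : ℕ) :
    ((D : ℝ) + 1) * (n.choose (D + 1) : ℝ) = ((n : ℝ) - D) * (n.choose D : ℝ) := by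
  rcases le_or_gt D n with hDn | hDn
  · have h := Nat.choose_succ_right_eq n D
    have h2 : ((n.choose (D + 1) * (D + 1) : ℕ) : ℝ) = ((n.choose D * (n - D) : ℕ) : ℝ) := by
      exact_mod_cast congrArg (Nat.cast : ℕ → ℝ) h
    push_cast [Nat.cast_sub hDn] at h2
    linarith
  · rw [Nat.choose_eq_zero_of_lt hDn,
      Nat.choose_eq_zero_of_lt (lt_trans hDn (Nat.lt_succ_self D))]
    simp

lemma cast_succ_mul_choose (n D : ℕ) :
    ((D : ℝ) + 1) * (((n + 1).choose (D + 1) : ℕ) : ℝ) = ((n : ℝ) + 1) * (n.choose D : ℝ) := by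
  have h := Nat.add_one_mul_choose_eq n D
  have h2 : (((n + 1) * n.choose D : ℕ) : ℝ) = (((n + 1).choose (D + 1) * (D + 1) : ℕ) : ℝ) := by
    exact_mod_cast congrArg (Nat.cast : ℕ → ℝ) h
  push_cast at h2
  linarith

lemma castf2 (n D : ℕ) :
    ((D : ℝ) + 1) * ((D : ℝ) + 2) * (((n + 2).choose (D + 2) : ℕ) : ℝ)
      = ((n : ℝ) + 1) * ((n : ℝ) + 2) * (n.choose D : ℝ) := by
  have hA := cast_succ_mul_choose (n + 1) (D + 1)
  have hB := cast_succ_mul_choose n D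
  push_cast at hA hB ⊢
  nlinarith [hA, hB]

lemma castf1 (n D : ℕ) :
    ((D : ℝ) + 1) * ((D : ℝ) + 2) * (((n + 1).choose (D + 2) : ℕ) : ℝ)
      = ((n : ℝ) + 1) * ((n : ℝ) - D) * (n.choose D : ℝ) := by
  have hA := cast_succ_mul_choose n (D + 1)
  have hB := cast_choose_succ_right n D
  push_cast at hA hB ⊢
  nlinarith [hA, hB]

lemma castf0 (n D : ℕ) :
    ((D : ℝ) + 1) * ((D : ℝ) + 2) * ((n.choose (D + 2) : ℕ) : ℝ)
      = ((n : ℝ) - D) * ((n : ℝ) - D - 1) * (n.choose D : ℝ) := by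
  have hA := cast_choose_succ_right n (D + 1)
  have hB := cast_choose_succ_right n D
  push_cast at hA hB ⊢
  nlinarith [hA, hB]

/-- The key pointwise binomial identity, multiplied through by `(D+1)(D+2)`. -/
lemma pointwise (D i k : ℕ) (c : ℝ) (hi : i ≤ D) :
    ((D : ℝ) + 1) * ((D : ℝ) + 2) *
        ((((k : ℝ)) ^ 2 + (k : ℝ) + c) * (((k + (D - i)).choose D : ℕ) : ℝ))
      = ((D : ℝ) + 1) * ((D : ℝ) + 2) *
        ( (((i : ℝ)) ^ 2 + (i : ℝ) + c) * ((((k + (D - i)) + 2).choose (D + 2) : ℕ) : ℝ)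
          + (2 * ((i : ℝ) + 1) * ((D : ℝ) + 1 - i) - 2 * c) *
              ((((k + (D - i)) + 1).choose (D + 2) : ℕ) : ℝ)
          + (((D : ℝ) - i) * ((D : ℝ) + 1 - i) + c) *
              (((k + (D - i)).choose (D + 2) : ℕ) : ℝ) ) := by
  set n := k + (D - i) with hn
  have hncast : (n : ℝ) = (k : ℝ) + (D : ℝ) - (i : ℝ) := by
    rw [hn]; push_cast [Nat.cast_sub hi]; ring
  have e2 := castf2 n D
  have e1 := castf1 n D
  have e0 := castf0 n D
  rw [hncast] at e2 e1 e0
  linear_combination (-(((i : ℝ)) ^ 2 + (i : ℝ) + c)) * e2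
    + (-(2 * ((i : ℝ) + 1) * ((D : ℝ) + 1 - i) - 2 * c)) * e1
    + (-(((D : ℝ) - i) * ((D : ℝ) + 1 - i) + c)) * e0

/-- `g` is represented with nonnegative coefficients in the binomial basis of degree `D`. -/
def Rep (D : ℕ) (g : ℕ → ℝ) : Prop :=
  ∃ p : ℕ → ℝ, (∀ j, 0 ≤ p j) ∧
    ∀ k, g k = ∑ j ∈ range (D + 1), p j * (((k + (D - j)).choose D : ℕ) : ℝ)

lemma rep_const (a : ℝ) (ha : 0 ≤ a) : Rep 0 (fun _ => a) := by
  refine ⟨fun _ => a, fun _ => ha, fun k => ?_⟩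
  simp

lemma rep_lin (a : ℝ) (ha : 0 ≤ a) : Rep 1 (fun k => a * (2 * (k : ℝ) + 1)) := by
  refine ⟨fun _ => a, fun _ => ha, fun k => ?_⟩
  rw [Finset.sum_range_succ, Finset.sum_range_one]
  norm_num [Nat.choose_one_right]
  push_cast
  ring

lemma rep_step {D : ℕ} {g : ℕ → ℝ} (hg : Rep D g) {c : ℝ} (hc0 : 0 ≤ c)
    (hc1 : c ≤ (D : ℝ) + 1) :
    Rep (D + 2) (fun k => (((k : ℝ)) ^ 2 + (k : ℝ) + c) * g k) := by
  obtain ⟨p, hp, hrep⟩ := hg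
  refine ⟨fun j => ∑ i ∈ range (D + 1), p i *
      ((if j = i then ((i : ℝ)) ^ 2 + (i : ℝ) + c else 0)
        + (if j = i + 1 then 2 * ((i : ℝ) + 1) * ((D : ℝ) + 1 - i) - 2 * c else 0)
        + (if j = i + 2 then ((D : ℝ) - i) * ((D : ℝ) + 1 - i) + c else 0)), ?_, ?_⟩
  · intro j
    apply Finset.sum_nonneg
    intro i hi
    have hiD : (i : ℝ) ≤ (D : ℝ) := by
      exact_mod_cast Nat.lt_succ_iff.mp (mem_range.mp hi)
    apply mul_nonneg (hp i)
    refine add_nonneg (add_nonneg ?_ ?_) ?_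
    · split_ifs
      · positivity
      · exact le_rfl
    · split_ifs
      · nlinarith
      · exact le_rfl
    · split_ifs
      · nlinarith
      · exact le_rfl
  · intro k
    dsimp only
    rw [hrep k, Finset.mul_sum]
    simp only [Finset.sum_mul]
    rw [Finset.sum_comm]
    apply Finset.sum_congr rfl
    intro i hi
    have hiD : i ≤ D := Nat.lt_succ_iff.mp (mem_range.mp hi)
    simp only [add_mul, mul_add, mul_ite, mul_zero, ite_mul, zero_mul,
      Finset.sum_add_distrib, Finset.sum_ite_eq', Finset.mem_range]
    rw [if_pos (by omega : i < D + 2 + 1), if_pos (by omega : i + 1 < D + 2 + 1),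
      if_pos (by omega : i + 2 < D + 2 + 1)]
    have hidx2 : k + (D + 2 - i) = (k + (D - i)) + 2 := by omega
    have hidx1 : k + (D + 2 - (i + 1)) = (k + (D - i)) + 1 := by omega
    have hidx0 : k + (D + 2 - (i + 2)) = k + (D - i) := by omega
    rw [hidx2, hidx1, hidx0]
    have key := pointwise D i k c hiD
    have hpos : ((D : ℝ) + 1) * ((D : ℝ) + 2) ≠ 0 := by positivity
    have key' := mul_left_cancel₀ hpos key
    linear_combination (p i) * key'

lemma basis (D j : ℕ) (hj : j ≤ D) :
    (PowerSeries.mk fun k => (((k + (D - j)).choose D : ℕ) : ℝ)) * (1 - X) ^ (D + 1)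
      = X ^ j := by
  have h1 : (PowerSeries.mk fun k => (((k + (D - j)).choose D : ℕ) : ℝ))
      = (PowerSeries.mk fun n => (((D + n).choose D : ℕ) : ℝ)) * X ^ j := by
    ext n
    rw [PowerSeries.coeff_mk, PowerSeries.coeff_mul_X_pow']
    split_ifs with hjn
    · rw [PowerSeries.coeff_mk]
      congr 2
      omega
    · have hlt : n + (D - j) < D := by omega
      simp [Nat.choose_eq_zero_of_lt hlt]
  rw [h1, mul_comm (PowerSeries.mk fun n => (((D + n).choose D : ℕ) : ℝ)) (X ^ j),
    mul_assoc, PowerSeries.mk_add_choose_mul_one_sub_pow_eq_one, mul_one]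

lemma coeff_nonneg_of_rep {D : ℕ} {g : ℕ → ℝ} (hg : Rep D g) (n : ℕ) :
    0 ≤ PowerSeries.coeff n (PowerSeries.mk g * (1 - X) ^ (D + 1)) := by
  obtain ⟨p, hp, hrep⟩ := hg
  have hmk : PowerSeries.mk g = ∑ j ∈ range (D + 1),
      PowerSeries.C (p j) * PowerSeries.mk fun k => (((k + (D - j)).choose D : ℕ) : ℝ) := by
    ext m
    rw [map_sum, PowerSeries.coeff_mk]
    simp only [PowerSeries.coeff_C_mul, PowerSeries.coeff_mk]
    exact hrep m
  rw [hmk, Finset.sum_mul]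
  rw [Finset.sum_congr rfl (fun j hj => by
    rw [mul_assoc, basis D j (Nat.lt_succ_iff.mp (mem_range.mp hj))])]
  rw [map_sum]
  apply Finset.sum_nonneg
  intro j hj
  rw [PowerSeries.coeff_C_mul, PowerSeries.coeff_X_pow]
  split_ifs
  · simpa using hp j
  · simp

lemma rep_prod (e : ℕ) (g : ℕ → ℝ) (hg : Rep e g) (c : ℕ → ℝ) (t : ℕ)
    (hc : ∀ i < t, 0 ≤ c i ∧ c i ≤ (e : ℝ) + 2 * i + 1) :
    Rep (e + 2 * t) (fun k => g k * ∏ i ∈ range t, (((k : ℝ)) ^ 2 + (k : ℝ) + c i)) := by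
  induction t with
  | zero => simpa using hg
  | succ t ih =>
    have hct := hc t (Nat.lt_succ_self t)
    have hct2 : c t ≤ ((e + 2 * t : ℕ) : ℝ) + 1 := by
      have := hct.2; push_cast; linarith
    have h1 := rep_step (ih (fun i hi => hc i (by omega))) hct.1 hct2
    have hdeg : e + 2 * (t + 1) = e + 2 * t + 2 := by ring
    rw [hdeg]
    have heq : (fun k : ℕ => g k * ∏ i ∈ range (t + 1), (((k : ℝ)) ^ 2 + (k : ℝ) + c i))
        = fun k : ℕ => (((k : ℝ)) ^ 2 + (k : ℝ) + c t) *
            (g k * ∏ i ∈ range t, (((k : ℝ)) ^ 2 + (k : ℝ) + c i)) := by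
      funext k
      rw [Finset.prod_range_succ]
      ring
    rw [heq]
    exact h1

end Stmt16Aux

open Stmt16Aux in
/-- Proposition 4.1: Let `f` be a CL-polynomial of degree `d`:
`f(z) = a·∏(z²+z+cᵢ)` (`d = 2m+2` even) or `f(z) = a(2z+1)·∏(z²+z+cᵢ)` (`d = 2m+3` odd),
with `a > 0` and real `cᵢ ≥ 1/4` ordered increasingly. If `cᵢ ≤ 2i+2` (d odd) resp.
`cᵢ ≤ 2i+1` (d even) for all `i`, then the h*-polynomial of `f` has nonnegative
coefficients. -/
theorem stmt16 (a : ℝ) (ha : 0 < a) (m : ℕ) (c : ℕ → ℝ)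
    (hc : ∀ i ≤ m, (1 : ℝ)/4 ≤ c i)
    (hmono : ∀ i j, i ≤ j → j ≤ m → c i ≤ c j)
    (d : ℕ) (hd : (Even d ∧ d = 2 * m + 2) ∨ (¬ Even d ∧ d = 2 * m + 3))
    (hbound : ∀ i ≤ m, c i ≤ if Even d then 2 * (i : ℝ) + 1 else 2 * (i : ℝ) + 2)
    (f : ℝ → ℝ)
    (hf : ∀ x : ℝ, f x = a * (if Even d then 1 else 2 * x + 1) *
      ∏ i ∈ Finset.range (m + 1), (x ^ 2 + x + c i))
    (h : Polynomial ℝ)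
    (hser : PowerSeries.mk (fun k : ℕ => f (k : ℝ)) * (1 - PowerSeries.X) ^ (d + 1)
      = (h : PowerSeries ℝ)) :
    ∀ j, 0 ≤ h.coeff j := by
  intro j
  have hcoe := congrArg (PowerSeries.coeff j) hser
  rw [Polynomial.coeff_coe] at hcoe
  rw [← hcoe]
  have hc0 : ∀ i ≤ m, (0 : ℝ) ≤ c i := fun i hi => le_trans (by norm_num) (hc i hi)
  rcases hd with ⟨hev, hdm⟩ | ⟨hodd, hdm⟩
  · -- even case
    have hrep := rep_prod 0 (fun _ => a) (rep_const a ha.le) c (m + 1)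
      (fun i hi => ⟨hc0 i (by omega), by
        have hb := hbound i (by omega)
        rw [if_pos hev] at hb
        push_cast
        linarith⟩)
    have hfun : (fun k : ℕ => f (k : ℝ))
        = fun k : ℕ => (fun _ : ℕ => a) k *
            ∏ i ∈ range (m + 1), (((k : ℝ)) ^ 2 + (k : ℝ) + c i) := by
      funext k
      rw [hf, if_pos hev]
      ring
    have hd' : d = 0 + 2 * (m + 1) := by omega
    rw [hfun, hd']
    exact coeff_nonneg_of_rep hrep j
  · -- odd case
    have hrep := rep_prod 1 (fun k => a * (2 * (k : ℝ) + 1)) (rep_lin a ha.le) c (m + 1)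
      (fun i hi => ⟨hc0 i (by omega), by
        have hb := hbound i (by omega)
        rw [if_neg hodd] at hb
        push_cast
        linarith⟩)
    have hfun : (fun k : ℕ => f (k : ℝ))
        = fun k : ℕ => (fun k : ℕ => a * (2 * (k : ℝ) + 1)) k *
            ∏ i ∈ range (m + 1), (((k : ℝ)) ^ 2 + (k : ℝ) + c i) := by
      funext k
      rw [hf, if_neg hodd]
    have hd' : d = 1 + 2 * (m + 1) := by omega
    rw [hfun, hd']
    exact coeff_nonneg_of_rep hrep j
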